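/- The geometric measure of entanglement of the Dicke state |S_{n,k}⟩ equals log₂( (n/k)^k (n/(n−k))^{n−k} / C(n,k) ), assuming 0 < k < n and that the maximal overlap of |S_{n,k}⟩ with product states is attained at a symmetric product state. -/

import Mathlib

open Finset

noncomputable def overlap {n : ℕ} (f g : (Fin n → Fin 2) → ℂ) : ℂ :=
  ∑ x : Fin n → Fin 2, (starRingEnd ℂ) (f x) * g x

noncomputable def symmPow (n : ℕ) (σ : Fin 2 → ℂ) : (Fin n → Fin 2) → ℂ :=
  fun x => ∏ i, σ (x i)

noncomputable def prodState {n : ℕ} (σ : Fin n → Fin 2 → ℂ) : (Fin n → Fin 2) → ℂ :=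
  fun x => ∏ j, σ j (x j)

def qubitUnit (σ : Fin 2 → ℂ) : Prop :=
  ‖σ 0‖ ^ 2 + ‖σ 1‖ ^ 2 = 1

noncomputable def dicke (n k : ℕ) : (Fin n → Fin 2) → ℂ :=
  fun x => if (∑ i, ((x i : ℕ))) = k then ((1 / Real.sqrt (n.choose k) : ℝ) : ℂ) else 0

noncomputable def bloch (θ ph : ℝ) : Fin 2 → ℂ :=
  fun i => if i = 0 then ((Real.cos (θ/2) : ℝ) : ℂ)
           else Complex.exp (Complex.I * ph) * ((Real.sin (θ/2) : ℝ) : ℂ)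

def isCPP (n : ℕ) (ψ : (Fin n → Fin 2) → ℂ) (σ : Fin 2 → ℂ) : Prop :=
  qubitUnit σ ∧ ∀ τ, qubitUnit τ →
    ‖overlap (symmPow n τ) ψ‖ ≤ ‖overlap (symmPow n σ) ψ‖

lemma sum_val_eq_card {n : ℕ} (x : Fin n → Fin 2) :
    (∑ i, ((x i : ℕ))) = (univ.filter fun i => x i = 1).card := by
  rw [Finset.card_filter]
  refine Finset.sum_congr rfl fun i _ => ?_
  by_cases h : x i = 1
  · simp [h]
  · simp only [h, if_false]
    omega

lemma prod_comp_aux {n k : ℕ} (hkn : k ≤ n) (τ : Fin 2 → ℂ) (x : Fin n → Fin 2)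
    (hx : (∑ i, ((x i : ℕ))) = k) :
    (∏ i, τ (x i)) = τ 1 ^ k * τ 0 ^ (n - k) := by
  have hcard : (univ.filter fun i => x i = 1).card = k := by
    rw [← sum_val_eq_card]; exact hx
  have hcard0 : (univ.filter fun i => ¬ x i = 1).card = n - k := by
    have h := Finset.card_filter_add_card_filter_not (s := (univ : Finset (Fin n)))
      (p := fun i => x i = 1)
    rw [Finset.card_univ, Fintype.card_fin, hcard] at h
    omega
  rw [← Finset.prod_filter_mul_prod_filter_not univ (fun i => x i = 1)]
  congr 1
  · rw [Finset.prod_congr rfl (fun i hi => ?_), Finset.prod_const, hcard]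
    rw [(Finset.mem_filter.mp hi).2]
  · rw [Finset.prod_congr rfl (fun i hi => ?_), Finset.prod_const, hcard0]
    have h1 := (Finset.mem_filter.mp hi).2
    have : x i = 0 := by omega
    rw [this]

lemma card_wt (n k : ℕ) :
    (univ.filter fun x : Fin n → Fin 2 => (∑ i, ((x i : ℕ))) = k).card = n.choose k := by
  have : n.choose k = (Finset.powersetCard k (univ : Finset (Fin n))).card := by
    rw [Finset.card_powersetCard, Finset.card_univ, Fintype.card_fin]
  rw [this]
  apply Finset.card_bij (fun x _ => univ.filter fun i => x i = 1)
  · intro x hx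
    simp only [Finset.mem_filter] at hx
    simp only [Finset.mem_powersetCard]
    exact ⟨Finset.filter_subset _ _ |>.trans (by simp), by rw [← sum_val_eq_card]; exact hx.2⟩
  · intro x hx y hy h
    funext i
    have := Finset.ext_iff.mp h i
    simp only [Finset.mem_filter, Finset.mem_univ, true_and] at this
    by_cases h1 : x i = 1
    · have h2 := this.mp h1; omega
    · have h2 : ¬ y i = 1 := fun hy1 => h1 (this.mpr hy1)
      omega
  · intro s hs
    simp only [Finset.mem_powersetCard] at hs
    refine ⟨fun i => if i ∈ s then 1 else 0, ?_, ?_⟩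
    · simp only [Finset.mem_filter, Finset.mem_univ, true_and]
      rw [sum_val_eq_card]
      rw [← hs.2]
      congr 1
      ext i
      simp only [Finset.mem_filter, Finset.mem_univ, true_and]
      by_cases h : i ∈ s <;> simp [h]
    · ext i
      simp only [Finset.mem_filter, Finset.mem_univ, true_and]
      by_cases h : i ∈ s <;> simp [h]

lemma overlap_symm (n k : ℕ) (hkn : k ≤ n) (σ : Fin 2 → ℂ) :
    overlap (symmPow n σ) (dicke n k)
      = (n.choose k : ℂ) * ((1 / Real.sqrt (n.choose k) : ℝ) : ℂ)
        * (starRingEnd ℂ (σ 1)) ^ k * (starRingEnd ℂ (σ 0)) ^ (n - k) := by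
  have key : ∀ x ∈ (univ.filter fun x : Fin n → Fin 2 => (∑ i, ((x i : ℕ))) = k),
      (starRingEnd ℂ) (∏ i, σ (x i)) * ((1 / Real.sqrt (n.choose k) : ℝ) : ℂ)
        = (starRingEnd ℂ (σ 1)) ^ k * (starRingEnd ℂ (σ 0)) ^ (n - k)
            * ((1 / Real.sqrt (n.choose k) : ℝ) : ℂ) := by
    intro x hx
    rw [map_prod]
    exact congrArg (· * _)
      (prod_comp_aux hkn (fun j => (starRingEnd ℂ) (σ j)) x (Finset.mem_filter.mp hx).2)
  unfold overlap symmPow dicke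
  simp only [mul_ite, mul_zero]
  rw [← Finset.sum_filter, Finset.sum_congr rfl key, Finset.sum_const, card_wt, nsmul_eq_mul]
  ring

lemma abs_sq_overlap (n k : ℕ) (hkn : k < n) (σ : Fin 2 → ℂ) :
    ‖overlap (symmPow n σ) (dicke n k)‖ ^ 2
      = (n.choose k : ℝ) * (‖σ 1‖ ^ 2) ^ k * (‖σ 0‖ ^ 2) ^ (n - k) := by
  have hC : (0:ℝ) < n.choose k := by
    exact_mod_cast Nat.choose_pos hkn.le
  rw [overlap_symm n k hkn.le σ]
  rw [norm_mul, norm_mul, norm_mul, norm_pow, norm_pow]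
  simp only [Complex.norm_natCast, Complex.norm_real, Real.norm_eq_abs, Complex.norm_conj]
  rw [abs_of_nonneg (by positivity)]
  rw [mul_pow, mul_pow, mul_pow]
  have h1 : ((n.choose k : ℝ)) ^ 2 * (1 / Real.sqrt (n.choose k)) ^ 2 = (n.choose k : ℝ) := by
    rw [div_pow, Real.sq_sqrt hC.le, one_pow]
    field_simp
  rw [h1, pow_right_comm _ k 2, pow_right_comm _ (n-k) 2]

lemma amgm2 (m k : ℕ) (hm : 0 < m) (hk : 0 < k) (p q : ℝ) (hp : 0 ≤ p) (hq : 0 ≤ q)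
    (hpq : p + q = 1) :
    q ^ k * p ^ m ≤ ((k:ℝ)/(m+k)) ^ k * ((m:ℝ)/(m+k)) ^ m := by
  have hn : (0:ℝ) < (m:ℝ) + k := by positivity
  obtain ⟨w₁, hw₁def⟩ : ∃ w : ℝ, w = (m:ℝ)/((m:ℝ)+k) := ⟨_, rfl⟩
  obtain ⟨w₂, hw₂def⟩ : ∃ w : ℝ, w = (k:ℝ)/((m:ℝ)+k) := ⟨_, rfl⟩
  have hw₁ : 0 < w₁ := by rw [hw₁def]; positivity
  have hw₂ : 0 < w₂ := by rw [hw₂def]; positivity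
  have hw : w₁ + w₂ = 1 := by rw [hw₁def, hw₂def]; field_simp
  have h1 : (p/w₁) ^ (w₁:ℝ) * (q/w₂) ^ (w₂:ℝ) ≤ w₁ * (p/w₁) + w₂ * (q/w₂) :=
    Real.geom_mean_le_arith_mean2_weighted hw₁.le hw₂.le (by positivity) (by positivity) hw
  have h2 : w₁ * (p/w₁) + w₂ * (q/w₂) = 1 := by
    rw [mul_div_cancel₀ _ hw₁.ne', mul_div_cancel₀ _ hw₂.ne', hpq]
  rw [h2] at h1
  have h3 : ((p/w₁) ^ (w₁:ℝ) * (q/w₂) ^ (w₂:ℝ)) ^ (m+k) ≤ 1 :=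
    pow_le_one₀ (by positivity) h1
  have hcast : ((m+k : ℕ) : ℝ) = (m:ℝ) + k := by push_cast; ring
  have h4 : ((p/w₁) ^ (w₁:ℝ) * (q/w₂) ^ (w₂:ℝ)) ^ (m+k)
      = (p/w₁) ^ m * (q/w₂) ^ k := by
    rw [mul_pow, ← Real.rpow_natCast ((p/w₁) ^ (w₁:ℝ)) (m+k),
      ← Real.rpow_natCast ((q/w₂) ^ (w₂:ℝ)) (m+k),
      ← Real.rpow_mul (by positivity), ← Real.rpow_mul (by positivity), hcast]
    have e1 : w₁ * ((m:ℝ) + k) = (m:ℝ) := by rw [hw₁def]; field_simp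
    have e2 : w₂ * ((m:ℝ) + k) = (k:ℝ) := by rw [hw₂def]; field_simp
    rw [e1, e2, Real.rpow_natCast, Real.rpow_natCast]
  rw [h4] at h3
  rw [div_pow, div_pow, div_mul_div_comm, div_le_one (by rw [hw₁def, hw₂def]; positivity)] at h3
  calc q ^ k * p ^ m = p ^ m * q ^ k := by ring
    _ ≤ w₁ ^ m * w₂ ^ k := h3
    _ = ((k:ℝ)/(m+k)) ^ k * ((m:ℝ)/(m+k)) ^ m := by rw [hw₁def, hw₂def]; ring

lemma symm_sSup (n k : ℕ) (hk : 0 < k) (hkn : k < n) :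
    sSup {a : ℝ | ∃ σ : Fin 2 → ℂ, qubitUnit σ ∧
        a = ‖overlap (symmPow n σ) (dicke n k)‖ ^ 2}
      = (n.choose k : ℝ) * ((k:ℝ)/n) ^ k * (((n-k : ℕ):ℝ)/n) ^ (n-k) := by
  have hm : 0 < n - k := by omega
  have hnk : ((n - k : ℕ) : ℝ) + (k : ℝ) = (n : ℝ) := by
    have : (n - k) + k = n := by omega
    exact_mod_cast congrArg (Nat.cast : ℕ → ℝ) this
  have hn0 : (0:ℝ) < n := by exact_mod_cast hk.trans hkn
  apply IsGreatest.csSup_eq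
  constructor
  · refine ⟨fun i => if i = 0 then ((Real.sqrt (((n-k : ℕ):ℝ)/n) : ℝ) : ℂ)
        else ((Real.sqrt ((k:ℝ)/n) : ℝ) : ℂ), ?_, ?_⟩
    · unfold qubitUnit
      simp only [if_pos rfl, if_neg (by decide : ¬ (1 : Fin 2) = 0), if_true, Complex.norm_real, Real.norm_eq_abs]
      rw [sq_abs, sq_abs, Real.sq_sqrt (by positivity), Real.sq_sqrt (by positivity)]
      field_simp
      linarith
    · rw [abs_sq_overlap n k hkn]
      simp only [if_pos rfl, if_neg (by decide : ¬ (1 : Fin 2) = 0), if_true, Complex.norm_real, Real.norm_eq_abs]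
      rw [sq_abs, sq_abs, Real.sq_sqrt (by positivity), Real.sq_sqrt (by positivity)]
  · rintro a ⟨σ, hσ, rfl⟩
    rw [abs_sq_overlap n k hkn, mul_assoc, mul_assoc]
    refine mul_le_mul_of_nonneg_left ?_ (by positivity)
    have := amgm2 (n-k) k hm hk (‖σ 0‖ ^ 2) (‖σ 1‖ ^ 2)
      (by positivity) (by positivity) hσ
    rw [hnk] at this
    exact this

theorem dicke_geometric_measure
    (n k : ℕ) (hk : 0 < k) (hkn : k < n)
    (hsym : sSup {a : ℝ | ∃ σ : Fin n → Fin 2 → ℂ, (∀ j, qubitUnit (σ j)) ∧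
              a = ‖overlap (prodState σ) (dicke n k)‖ ^ 2}
          = sSup {a : ℝ | ∃ σ : Fin 2 → ℂ, qubitUnit σ ∧
              a = ‖overlap (symmPow n σ) (dicke n k)‖ ^ 2}) :
    - Real.logb 2 (sSup {a : ℝ | ∃ σ : Fin n → Fin 2 → ℂ, (∀ j, qubitUnit (σ j)) ∧
        a = ‖overlap (prodState σ) (dicke n k)‖ ^ 2})
      = Real.logb 2 ((((n : ℝ) / k) ^ k * ((n : ℝ) / ((n - k : ℕ) : ℝ)) ^ (n - k))
          / (n.choose k : ℝ)) := by
  rw [hsym, symm_sSup n k hk hkn]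
  have hn0 : (0:ℝ) < n := by exact_mod_cast hk.trans hkn
  have hk0 : (0:ℝ) < k := by exact_mod_cast hk
  have hm0 : (0:ℝ) < ((n - k : ℕ) : ℝ) := by exact_mod_cast Nat.sub_pos_of_lt hkn
  have hC0 : (0:ℝ) < (n.choose k : ℝ) := by exact_mod_cast Nat.choose_pos hkn.le
  have key : (((n : ℝ) / k) ^ k * ((n : ℝ) / ((n - k : ℕ) : ℝ)) ^ (n - k)) / (n.choose k : ℝ)
      = ((n.choose k : ℝ) * ((k:ℝ)/n) ^ k * (((n-k : ℕ):ℝ)/n) ^ (n-k))⁻¹ := by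
    refine eq_inv_of_mul_eq_one_left ?_
    rw [div_pow, div_pow, div_pow, div_pow]
    field_simp
  rw [key, Real.logb_inv]
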